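/- Let α > 0 with α ≠ 1, set w(v) := 1 + ((α−1)/α)·v and V_ast(v) := (1/(1+α))·(1 − w(v)^{(1+α)/(1−α)}) + ((α−1)/α)·v·w(v)^{2α/(1−α)}. If 0 < α < 1, then V_ast(v) → 1/(1+α) as v → (α/(1−α))⁻; if α > 1, then V_ast(v) → 1/(1+α) as v → +∞. -/

import Mathlib

open Real Filter Set

/-- With `w(v) = 1 + ((α-1)/α) v` and
`V_ast(v) = (1/(1+α))(1 - w(v)^{(1+α)/(1-α)}) + ((α-1)/α) v w(v)^{2α/(1-α)}`, the astrometric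
relative speed of a comoving particle tends to `1/(1+α)` as `v → (α/(1-α))⁻` when `0 < α < 1`,
and as `v → +∞` when `α > 1`. -/
theorem ast_speed_limit (α : ℝ) (hα : 0 < α) (hα1 : α ≠ 1) :
    (0 < α ∧ α < 1 →
      Tendsto (fun v : ℝ =>
          (1 / (1 + α)) * (1 - (1 + (α - 1) / α * v) ^ ((1 + α) / (1 - α))) +
            (α - 1) / α * v * (1 + (α - 1) / α * v) ^ (2 * α / (1 - α)))
        (nhdsWithin (α / (1 - α)) (Set.Iio (α / (1 - α)))) (nhds (1 / (1 + α)))) ∧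
    (1 < α →
      Tendsto (fun v : ℝ =>
          (1 / (1 + α)) * (1 - (1 + (α - 1) / α * v) ^ ((1 + α) / (1 - α))) +
            (α - 1) / α * v * (1 + (α - 1) / α * v) ^ (2 * α / (1 - α)))
        atTop (nhds (1 / (1 + α)))) := by
  have hα0 : α ≠ 0 := ne_of_gt hα
  constructor
  · rintro ⟨-, h1⟩
    have h1α : (0:ℝ) < 1 - α := by linarith
    have hE : (0:ℝ) < (1 + α) / (1 - α) := by positivity
    have he : (0:ℝ) < 2 * α / (1 - α) := by positivity
    -- w tends to 0
    have hw : Tendsto (fun v : ℝ => 1 + (α - 1) / α * v)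
        (nhdsWithin (α / (1 - α)) (Set.Iio (α / (1 - α)))) (nhds 0) := by
      have hc : Tendsto (fun v : ℝ => 1 + (α - 1) / α * v) (nhds (α / (1 - α)))
          (nhds (1 + (α - 1) / α * (α / (1 - α)))) := by
        exact (continuous_const.add (continuous_const.mul continuous_id)).tendsto _
      have hval : 1 + (α - 1) / α * (α / (1 - α)) = 0 := by
        field_simp
        ring
      rw [hval] at hc
      exact hc.mono_left nhdsWithin_le_nhds
    have hcv : Tendsto (fun v : ℝ => (α - 1) / α * v)
        (nhdsWithin (α / (1 - α)) (Set.Iio (α / (1 - α)))) (nhds (-1)) := by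
      have hc : Tendsto (fun v : ℝ => (α - 1) / α * v) (nhds (α / (1 - α)))
          (nhds ((α - 1) / α * (α / (1 - α)))) :=
        (continuous_const.mul continuous_id).tendsto _
      have hval : (α - 1) / α * (α / (1 - α)) = -1 := by
        field_simp
        ring
      rw [hval] at hc
      exact hc.mono_left nhdsWithin_le_nhds
    have hwE : Tendsto (fun v : ℝ => (1 + (α - 1) / α * v) ^ ((1 + α) / (1 - α)))
        (nhdsWithin (α / (1 - α)) (Set.Iio (α / (1 - α)))) (nhds 0) := by
      have := ((Real.continuousAt_rpow_const 0 ((1 + α) / (1 - α))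
        (Or.inr hE.le)).tendsto).comp hw
      simpa [Real.zero_rpow (ne_of_gt hE), Function.comp_def] using this
    have hwe : Tendsto (fun v : ℝ => (1 + (α - 1) / α * v) ^ (2 * α / (1 - α)))
        (nhdsWithin (α / (1 - α)) (Set.Iio (α / (1 - α)))) (nhds 0) := by
      have := ((Real.continuousAt_rpow_const 0 (2 * α / (1 - α))
        (Or.inr he.le)).tendsto).comp hw
      simpa [Real.zero_rpow (ne_of_gt he), Function.comp_def] using this
    have := (((tendsto_const_nhds (x := (1:ℝ)/(1+α))).mul
      ((tendsto_const_nhds (x := (1:ℝ))).sub hwE)).add (hcv.mul hwe))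
    simpa using this
  · intro h1
    have hα1' : (0:ℝ) < α - 1 := by linarith
    set c := (α - 1) / α with hc
    have hcpos : 0 < c := by positivity
    have hw : Tendsto (fun v : ℝ => 1 + c * v) atTop atTop := by
      exact tendsto_atTop_add_const_left _ 1 (Tendsto.const_mul_atTop hcpos tendsto_id)
    have hwpos : ∀ᶠ v in atTop, 0 < 1 + c * v := hw.eventually_gt_atTop 0
    have hsub : (1:ℝ) - α = -(α - 1) := by ring
    have hEneg : (1 + α) / (1 - α) = -((1 + α) / (α - 1)) := by
      rw [hsub, div_neg]
    have heneg : 2 * α / (1 - α) = -(2 * α / (α - 1)) := by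
      rw [hsub, div_neg]
    have hwE : Tendsto (fun v : ℝ => (1 + c * v) ^ ((1 + α) / (1 - α))) atTop (nhds 0) := by
      have h := (tendsto_rpow_neg_atTop (show (0:ℝ) < (1 + α) / (α - 1) by positivity)).comp hw
      simpa [Function.comp_def, hEneg] using h
    have hwe : Tendsto (fun v : ℝ => (1 + c * v) ^ (2 * α / (1 - α))) atTop (nhds 0) := by
      have h := (tendsto_rpow_neg_atTop (show (0:ℝ) < 2 * α / (α - 1) by positivity)).comp hw
      simpa [Function.comp_def, heneg] using h
    have key : (fun v : ℝ =>
          (1 / (1 + α)) * (1 - (1 + c * v) ^ ((1 + α) / (1 - α))) +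
            c * v * (1 + c * v) ^ (2 * α / (1 - α))) =ᶠ[atTop]
        (fun v : ℝ =>
          (1 / (1 + α)) * (1 - (1 + c * v) ^ ((1 + α) / (1 - α))) +
            ((1 + c * v) ^ ((1 + α) / (1 - α)) - (1 + c * v) ^ (2 * α / (1 - α)))) := by
      filter_upwards [hwpos] with v hv
      have h1α : (1:ℝ) - α ≠ 0 := by intro h; nlinarith
      have hEe : (1 + α) / (1 - α) = 1 + 2 * α / (1 - α) := by
        field_simp
        ring
      have : (1 + c * v) ^ ((1 + α) / (1 - α)) =
          (1 + c * v) * (1 + c * v) ^ (2 * α / (1 - α)) := by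
        rw [hEe, Real.rpow_add hv, Real.rpow_one]
      rw [this]
      ring
    have lim := (((tendsto_const_nhds (x := (1:ℝ)/(1+α))).mul
      ((tendsto_const_nhds (x := (1:ℝ))).sub hwE)).add (hwE.sub hwe))
    refine Tendsto.congr' key.symm ?_
    simpa using lim
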